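/- arXiv:1605.08258 — 4 statements merged into one kernel-verified Lean document; each statement's English description precedes it below -/
import Mathlib

section
/- Let Φ be a real constant and F : ℝ → ℝ differentiable with F'(ξ)² ≠ 1 for all ξ. Define f(x,t) = t·F(x/t) for t > 0. Then f satisfies the eikonal equation ∂f/∂t = Φ(∂f/∂x)² + (∂f/∂x)²·(∂f/∂t) for all x ∈ ℝ, t > 0 if and only if F satisfies the Clairaut equation F(ξ) − ξF'(ξ) = Φ F'(ξ)²/(1 − F'(ξ)²) for all ξ ∈ ℝ. In particular, for every real λ with λ² ≠ 1 the affine function F(ξ) = λξ + Φλ²/(1−λ²) is a solution of this Clairaut equation. -/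
lemma deriv_x (F : ℝ → ℝ) (hF : Differentiable ℝ F) (t x : ℝ) (ht : t ≠ 0) :
    deriv (fun y : ℝ => t * F (y / t)) x = deriv F (x / t) := by
  have h1 : HasDerivAt (fun y : ℝ => y / t) (1 / t) x := by
    simpa using (hasDerivAt_id x).div_const t
  have h2 : HasDerivAt (fun y : ℝ => F (y / t)) (deriv F (x / t) * (1 / t)) x :=
    ((hF (x / t)).hasDerivAt).comp x h1
  have h3 := h2.const_mul t
  rw [h3.deriv]
  field_simp

lemma deriv_t (F : ℝ → ℝ) (hF : Differentiable ℝ F) (t x : ℝ) (ht : t ≠ 0) :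
    deriv (fun s : ℝ => s * F (x / s)) t = F (x / t) - (x / t) * deriv F (x / t) := by
  have h1 : HasDerivAt (fun s : ℝ => x / s) (-(x / t ^ 2)) t := by
    have := ((hasDerivAt_id t).inv ht).const_mul x
    simpa [div_eq_mul_inv, mul_comm] using this
  have h2 : HasDerivAt (fun s : ℝ => F (x / s)) (deriv F (x / t) * (-(x / t ^ 2))) t :=
    ((hF (x / t)).hasDerivAt).comp t h1
  have h3 := (hasDerivAt_id t).mul h2
  simp only [id] at h3
  rw [show (fun s : ℝ => s * F (x / s)) = (id * fun s => F (x / s)) from rfl, h3.deriv]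
  field_simp
  ring

/-- Setting `f(x,t) = t·F(x/t)` in the JWKB eikonal equation
`∂f/∂t = Φ(∂f/∂x)² + (∂f/∂x)²·(∂f/∂t)` is equivalent to the Clairaut equation
`F(ξ) − ξF'(ξ) = Φ F'(ξ)²/(1 − F'(ξ)²)`; moreover every affine function
`F(ξ) = λξ + Φλ²/(1−λ²)` (with `λ² ≠ 1`) solves the Clairaut equation. -/
theorem eikonal_selfsimilar_iff_clairaut
    (Φ : ℝ) (F : ℝ → ℝ) (hF : Differentiable ℝ F)
    (h1 : ∀ ξ : ℝ, (deriv F ξ) ^ 2 ≠ 1) :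
    ((∀ x t : ℝ, 0 < t →
        deriv (fun s : ℝ => s * F (x / s)) t =
          Φ * (deriv (fun y : ℝ => t * F (y / t)) x) ^ 2 +
            (deriv (fun y : ℝ => t * F (y / t)) x) ^ 2 *
              deriv (fun s : ℝ => s * F (x / s)) t)
      ↔
      (∀ ξ : ℝ, F ξ - ξ * deriv F ξ =
        Φ * (deriv F ξ) ^ 2 / (1 - (deriv F ξ) ^ 2)))
    ∧
    (∀ l : ℝ, l ^ 2 ≠ 1 →
      ∀ ξ : ℝ,
        (fun z : ℝ => l * z + Φ * l ^ 2 / (1 - l ^ 2)) ξ -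
            ξ * deriv (fun z : ℝ => l * z + Φ * l ^ 2 / (1 - l ^ 2)) ξ =
          Φ * (deriv (fun z : ℝ => l * z + Φ * l ^ 2 / (1 - l ^ 2)) ξ) ^ 2 /
            (1 - (deriv (fun z : ℝ => l * z + Φ * l ^ 2 / (1 - l ^ 2)) ξ) ^ 2)) := by
  constructor
  · constructor
    · intro h ξ
      have := h ξ 1 one_pos
      rw [deriv_x F hF 1 ξ one_ne_zero, deriv_t F hF 1 ξ one_ne_zero] at this
      simp only [div_one] at this
      have hne : 1 - (deriv F ξ) ^ 2 ≠ 0 := by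
        intro hc; exact h1 ξ (by linarith)
      field_simp
      nlinarith [this]
    · intro h x t ht
      rw [deriv_x F hF t x ht.ne', deriv_t F hF t x ht.ne']
      set ξ := x / t
      have hc := h ξ
      have hne : 1 - (deriv F ξ) ^ 2 ≠ 0 := by
        intro hc2; exact h1 ξ (by linarith)
      have : (F ξ - ξ * deriv F ξ) * (1 - (deriv F ξ) ^ 2) = Φ * (deriv F ξ) ^ 2 := by
        field_simp at hc
        linarith [hc]
      nlinarith [this]
  · intro l hl ξ
    have hd : deriv (fun z : ℝ => l * z + Φ * l ^ 2 / (1 - l ^ 2)) ξ = l := by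
      have : HasDerivAt (fun z : ℝ => l * z + Φ * l ^ 2 / (1 - l ^ 2)) l ξ := by
        simpa using ((hasDerivAt_id ξ).const_mul l).add_const (Φ * l ^ 2 / (1 - l ^ 2))
      exact this.deriv
    rw [hd]
    ring
end

section
/- Let Φ ≠ 0 and, for p ∈ ℂ with p² ≠ 1, set ξ(p) = −2Φp/(1−p²)² and F(p) = −Φ(2p²/(1−p²)² − p²/(1−p²)). If p, q ∈ ℂ with p² ≠ 1, q² ≠ 1 satisfy ξ(p) = ξ(q) and F(p) = F(q), then p = q. (Consequently, distinct saddle branches over the same point ξ never give equal values of F, i.e. turning points between distinct branches can only occur at the branch points p = ±i/√3.) -/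
open Complex

/-- The parametrization `p ↦ (ξ(p), F(p))` of the singular solution of the
Clairaut equation, where `ξ(p) = −2Φp/(1−p²)²` and
`F(p) = −Φ(2p²/(1−p²)² − p²/(1−p²))` with `Φ ≠ 0`, is injective on
`{p : p² ≠ 1}`: distinct saddle branches over the same point `ξ` never give
equal values of `F`. -/
theorem singular_solution_parametrization_injective
    (Φ : ℝ) (hΦ : Φ ≠ 0)
    (ξ F : ℂ → ℂ)
    (hξ : ∀ p : ℂ, ξ p = -2 * (Φ : ℂ) * p / (1 - p ^ 2) ^ 2)
    (hF : ∀ p : ℂ, F p = -(Φ : ℂ) *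
      (2 * p ^ 2 / (1 - p ^ 2) ^ 2 - p ^ 2 / (1 - p ^ 2)))
    (p q : ℂ) (hp : p ^ 2 ≠ 1) (hq : q ^ 2 ≠ 1)
    (hξpq : ξ p = ξ q) (hFpq : F p = F q) :
    p = q := by
  have hΦ' : (Φ : ℂ) ≠ 0 := Complex.ofReal_ne_zero.mpr hΦ
  have ha : (1 : ℂ) - p ^ 2 ≠ 0 := sub_ne_zero.mpr (Ne.symm hp)
  have hb : (1 : ℂ) - q ^ 2 ≠ 0 := sub_ne_zero.mpr (Ne.symm hq)
  rw [hξ, hξ] at hξpq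
  rw [hF, hF] at hFpq
  have e1 : p * (1 - q ^ 2) ^ 2 = q * (1 - p ^ 2) ^ 2 := by
    apply mul_left_cancel₀ (show (-2 : ℂ) * (Φ : ℂ) ≠ 0 by
      exact mul_ne_zero (by norm_num) hΦ')
    field_simp at hξpq
    linear_combination (2 * (Φ : ℂ)) * hξpq
  have e2 : p ^ 2 * (1 - q ^ 2) ^ 2 * (1 + p ^ 2)
      = q ^ 2 * (1 - p ^ 2) ^ 2 * (1 + q ^ 2) := by
    have h : (p ^ 2 * (1 - q ^ 2) ^ 2 * (1 + p ^ 2)) * ((1 - p ^ 2) * (1 - q ^ 2))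
        = (q ^ 2 * (1 - p ^ 2) ^ 2 * (1 + q ^ 2)) * ((1 - p ^ 2) * (1 - q ^ 2)) := by
      apply mul_left_cancel₀ hΦ'
      field_simp at hFpq
      linear_combination (-(Φ : ℂ) * (1 - p ^ 2) * (1 - q ^ 2)) * hFpq
    exact mul_right_cancel₀ (mul_ne_zero ha hb) h
  by_contra hne
  have hd : p - q ≠ 0 := sub_ne_zero.mpr hne
  have hp0 : p ≠ 0 := by
    rintro rfl
    have : q = 0 := by
      have : q * (1 - (0 : ℂ) ^ 2) ^ 2 = 0 := by linear_combination -e1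
      simpa using this
    exact hne this.symm
  have hq0 : q ≠ 0 := by
    rintro rfl
    have : p = 0 := by
      have : p * (1 - (0 : ℂ) ^ 2) ^ 2 = 0 := by linear_combination e1
      simpa using this
    exact hne this
  have key : p * q * (1 - q ^ 2) ^ 2 * (p - q) * (1 + p ^ 2 + p * q + q ^ 2)
      = 0 := by
    linear_combination q * e2 - q ^ 2 * (1 + q ^ 2) * e1
  have hsum : 1 + p ^ 2 + p * q + q ^ 2 = 0 := by
    have hne' : p * q * (1 - q ^ 2) ^ 2 * (p - q) ≠ 0 :=
      mul_ne_zero (mul_ne_zero (mul_ne_zero hp0 hq0) (pow_ne_zero 2 hb)) hd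
    exact (mul_eq_zero.mp key).resolve_left hne'
  have hg1 : 1 + 2 * (p * q) - p * q * (p ^ 2 + p * q + q ^ 2) = 0 := by
    have g : (p - q) * (1 + 2 * (p * q) - p * q * (p ^ 2 + p * q + q ^ 2))
        = 0 := by linear_combination e1
    exact (mul_eq_zero.mp g).resolve_left hd
  have hsq : (p - q) ^ 2 = 0 := by
    linear_combination (1 - p * q) * hsum - hg1
  exact hd ((pow_eq_zero_iff (two_ne_zero)).mp hsq)
end

section
/- Fix Φ = 1 and let λ, p ∈ ℂ with λ² ≠ 1 and p² ≠ 1. The equation F(p) = λ ξ(p) + λ²/(1−λ²), where ξ(p) = −2p/(1−p²)² and F(p) = −(2p²/(1−p²)² − p²/(1−p²)), holds if and only if (p² + 2λp + 1)(p − λ)² = 0. Hence if p ≠ λ then p² + 2λp + 1 = 0, i.e. p = −λ ± √(λ²−1); and for real λ with 0 < λ < 1 the corresponding turning points are ξ(p) = (1/2)(λ/(λ²−1) ± i/√(1−λ²)), which have negative real part. -/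
open Complex

/-- With `Φ = 1`, `ξ(p) = −2p/(1−p²)²` and `F(p) = −(2p²/(1−p²)² − p²/(1−p²))`:
the turning-point equation `F(p) = λξ(p) + λ²/(1−λ²)` holds iff
`(p² + 2λp + 1)(p − λ)² = 0`; hence if `p ≠ λ` then `p² + 2λp + 1 = 0`, i.e.
`p = −λ ± √(λ²−1)`; and for real `λ ∈ (0,1)` the corresponding turning points
are `ξ(p) = (1/2)(λ/(λ²−1) ± i/√(1−λ²))`, which have negative real part. -/
theorem turning_points_of_stokes_analysis
    (ξ F : ℂ → ℂ)
    (hξ : ∀ p : ℂ, ξ p = -2 * p / (1 - p ^ 2) ^ 2)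
    (hF : ∀ p : ℂ, F p = -(2 * p ^ 2 / (1 - p ^ 2) ^ 2 - p ^ 2 / (1 - p ^ 2)))
    (l p : ℂ) (hl : l ^ 2 ≠ 1) (hp : p ^ 2 ≠ 1) :
    (F p = l * ξ p + l ^ 2 / (1 - l ^ 2) ↔
      (p ^ 2 + 2 * l * p + 1) * (p - l) ^ 2 = 0) ∧
    (F p = l * ξ p + l ^ 2 / (1 - l ^ 2) → p ≠ l →
      (p ^ 2 + 2 * l * p + 1 = 0 ∧
        (p = -l + (l ^ 2 - 1) ^ ((1 : ℂ) / 2) ∨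
         p = -l - (l ^ 2 - 1) ^ ((1 : ℂ) / 2)))) ∧
    (∀ a : ℝ, 0 < a → a < 1 → l = (a : ℂ) →
      p ^ 2 + 2 * l * p + 1 = 0 →
      ((ξ p = (1 / 2 : ℂ) * (((a / (a ^ 2 - 1) : ℝ) : ℂ) +
            Complex.I / (Real.sqrt (1 - a ^ 2) : ℂ)) ∨
        ξ p = (1 / 2 : ℂ) * (((a / (a ^ 2 - 1) : ℝ) : ℂ) -
            Complex.I / (Real.sqrt (1 - a ^ 2) : ℂ))) ∧
        (ξ p).re < 0)) := by
  have hA : (1 : ℂ) - p ^ 2 ≠ 0 := sub_ne_zero.mpr (Ne.symm hp)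
  have hB : (1 : ℂ) - l ^ 2 ≠ 0 := sub_ne_zero.mpr (Ne.symm hl)
  have key : F p = l * ξ p + l ^ 2 / (1 - l ^ 2) ↔
      (p ^ 2 + 2 * l * p + 1) * (p - l) ^ 2 = 0 := by
    constructor
    · intro h
      rw [hF p, hξ p] at h
      field_simp at h
      have h0 : ((p ^ 2 + 2 * l * p + 1) * (p - l) ^ 2) * (1 - p ^ 2) ^ 3 = 0 := by
        linear_combination (-(1 - p ^ 2) ^ 3) * h
      rcases mul_eq_zero.mp h0 with h1 | h2
      · exact h1
      · exact absurd h2 (pow_ne_zero 3 hA)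
    · intro h
      rw [hF p, hξ p]
      field_simp
      linear_combination -h
  refine ⟨key, ?_, ?_⟩
  · intro h hne
    have h0 := key.mp h
    have h1 : p ^ 2 + 2 * l * p + 1 = 0 := by
      rcases mul_eq_zero.mp h0 with h1 | h2
      · exact h1
      · exact absurd (sub_eq_zero.mp (pow_eq_zero_iff two_ne_zero |>.mp h2)) hne
    refine ⟨h1, ?_⟩
    set s : ℂ := (l ^ 2 - 1) ^ ((1 : ℂ) / 2) with hsdef
    have hz : l ^ 2 - 1 ≠ 0 := sub_ne_zero.mpr hl
    have hs2 : s ^ 2 = l ^ 2 - 1 := by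
      rw [hsdef, sq, ← Complex.cpow_add _ _ hz]
      norm_num
    have hfac : (p - (-l + s)) * (p - (-l - s)) = 0 := by
      linear_combination h1 - hs2
    rcases mul_eq_zero.mp hfac with h2 | h2
    · exact Or.inl (sub_eq_zero.mp h2)
    · exact Or.inr (sub_eq_zero.mp h2)
  · intro a ha0 ha1 hla hq
    subst hla
    set s : ℝ := Real.sqrt (1 - a ^ 2) with hsdef
    have hs2r : s ^ 2 = 1 - a ^ 2 := Real.sq_sqrt (by nlinarith)
    have hspos : 0 < s := Real.sqrt_pos.mpr (by nlinarith)
    have hs2 : (s : ℂ) ^ 2 = 1 - (a : ℂ) ^ 2 := by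
      have := congrArg (fun x : ℝ => (x : ℂ)) hs2r
      push_cast at this
      exact this
    have hsne : (s : ℂ) ≠ 0 := by
      exact_mod_cast hspos.ne'
    have hane : ((a : ℂ) ^ 2 - 1) ≠ 0 := sub_ne_zero.mpr hl
    have hfac : (p - (-(a : ℂ) + Complex.I * s)) * (p - (-(a : ℂ) - Complex.I * s)) = 0 := by
      linear_combination hq + hs2 - (s : ℂ) ^ 2 * Complex.I_sq
    have hre : a / (a ^ 2 - 1) / 2 < 0 := by
      apply div_neg_of_neg_of_pos _ two_pos
      apply div_neg_of_pos_of_neg ha0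
      nlinarith
    have hIs : Complex.I / (s : ℂ) = ((s⁻¹ : ℝ) : ℂ) * Complex.I := by
      push_cast
      ring
    rcases mul_eq_zero.mp hfac with h2 | h2
    · have hpv : p = -(a : ℂ) + Complex.I * s := sub_eq_zero.mp h2
      subst hpv
      have hξv : ξ (-(a : ℂ) + Complex.I * s) = (1 / 2 : ℂ) * (((a / (a ^ 2 - 1) : ℝ) : ℂ) -
          Complex.I / (Real.sqrt (1 - a ^ 2) : ℂ)) := by
        rw [hξ]
        push_cast
        rw [← hsdef]
        field_simp
        linear_combination (1*Complex.I^1 + 1*(a:ℂ)^4*Complex.I^1 + 3*(a:ℂ)^3*(s:ℂ)^1 + -3*(a:ℂ)^2*(s:ℂ)^2*Complex.I^1 + 1*(a:ℂ)^1*(s:ℂ)^1 + -1*(a:ℂ)^1*(s:ℂ)^3 + -1*(s:ℂ)^2*Complex.I^1 + -2*(a:ℂ)^2*Complex.I^1) * hs2 + (-4*(a:ℂ)^5*(s:ℂ)^1 + 8*(a:ℂ)^3*(s:ℂ)^1 + -2*(a:ℂ)^3*(s:ℂ)^3 + 6*(a:ℂ)^4*(s:ℂ)^2*Complex.I^1 +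 -8*(a:ℂ)^2*(s:ℂ)^2*Complex.I^1 + 3*(a:ℂ)^2*(s:ℂ)^4*Complex.I^1 + -4*(a:ℂ)^3*(s:ℂ)^3*Complex.I^2 + 4*(a:ℂ)^1*(s:ℂ)^3*Complex.I^2 + -4*(a:ℂ)^1*(s:ℂ)^1 + -1*(a:ℂ)^1*(s:ℂ)^5*Complex.I^2 + 1*(a:ℂ)^2*(s:ℂ)^4*Complex.I^3 + -1*(s:ℂ)^4*Complex.I^3 + -2*(a:ℂ)^1*(s:ℂ)^3 + 2*(s:ℂ)^2*Complex.I^1 + 1*(a:ℂ)^1*(s:ℂ)^5 + 1*(s:ℂ)^4*Complex.I^1) * Complex.I_sq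
      refine ⟨Or.inr hξv, ?_⟩
      rw [hξv, hIs]
      have hc : ((a:ℂ) / ((a:ℂ)^2 - 1)).re = a / (a^2 - 1) := by
        rw [show ((a:ℂ)^2 - 1) = ((a^2 - 1 : ℝ) : ℂ) by push_cast; ring, ← Complex.ofReal_div,
          Complex.ofReal_re]
      simp [hc]
      linarith [hre]
    · have hpv : p = -(a : ℂ) - Complex.I * s := sub_eq_zero.mp h2
      subst hpv
      have hξv : ξ (-(a : ℂ) - Complex.I * s) = (1 / 2 : ℂ) * (((a / (a ^ 2 - 1) : ℝ) : ℂ) +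
          Complex.I / (Real.sqrt (1 - a ^ 2) : ℂ)) := by
        rw [hξ]
        push_cast
        rw [← hsdef]
        field_simp
        linear_combination (-1*Complex.I^1 + -1*(a:ℂ)^4*Complex.I^1 + 3*(a:ℂ)^3*(s:ℂ)^1 + 3*(a:ℂ)^2*(s:ℂ)^2*Complex.I^1 + 1*(a:ℂ)^1*(s:ℂ)^1 + -1*(a:ℂ)^1*(s:ℂ)^3 + 1*(s:ℂ)^2*Complex.I^1 + 2*(a:ℂ)^2*Complex.I^1) * hs2 + (-4*(a:ℂ)^5*(s:ℂ)^1 + 8*(a:ℂ)^3*(s:ℂ)^1 + -2*(a:ℂ)^3*(s:ℂ)^3 + -6*(a:ℂ)^4*(s:ℂ)^2*Complex.I^1 + 8*(a:ℂ)^2*(s:ℂ)^2*Complex.I^1 + -3*(a:ℂ)^2*(s:ℂ)^4*Complex.I^1 + -4*(a:ℂ)^3*(s:ℂ)^3*Complex.I^2 + 4*(a:ℂ)^1*(s:ℂ)^3*Complex.I^2 + -4*(a:ℂ)^1*(s:ℂ)^1 + -1*(a:ℂ)^1*(s:ℂ)^5*Complex.I^2 + -1*(a:ℂ)^2*(s:ℂ)^4*Complex.I^3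 + 1*(s:ℂ)^4*Complex.I^3 + -2*(a:ℂ)^1*(s:ℂ)^3 + -2*(s:ℂ)^2*Complex.I^1 + 1*(a:ℂ)^1*(s:ℂ)^5 + -1*(s:ℂ)^4*Complex.I^1) * Complex.I_sq
      refine ⟨Or.inl hξv, ?_⟩
      rw [hξv, hIs]
      have hc : ((a:ℂ) / ((a:ℂ)^2 - 1)).re = a / (a^2 - 1) := by
        rw [show ((a:ℂ)^2 - 1) = ((a^2 - 1 : ℝ) : ℂ) by push_cast; ring, ← Complex.ofReal_div,
          Complex.ofReal_re]
      simp [hc]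
      linarith [hre]
end

section
/- Let u : [t₀, ∞) → ℝ be differentiable and satisfy u'(t) = u(t) e^{−u(t)²} with u(t₀) > 0. Then u is strictly increasing, u(t) → +∞ as t → +∞, and the asymptotic relations e^{u(t)²}/(2 t u(t)²) → 1 and u(t)/√(log t) → 1 hold as t → +∞. -/
open Filter

lemma tendsto_div_id_of_deriv_tendsto {a L : ℝ} {f g : ℝ → ℝ}
    (hf : ∀ t ∈ Set.Ici a, HasDerivAt f (g t) t)
    (hg : Tendsto g atTop (nhds L)) :
    Tendsto (fun t => f t / t) atTop (nhds L) := by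
  rw [Metric.tendsto_nhds]
  intro ε hε
  have h2 : (0:ℝ) < ε / 2 := by linarith
  obtain ⟨b₀, hb₀⟩ := (Metric.tendsto_nhds.1 hg (ε/2) h2).exists_forall_of_atTop
  set b : ℝ := max b₀ (max a 1) with hb
  have hba : a ≤ b := le_trans (le_max_left a 1) (le_max_right _ _)
  have hb1 : (1:ℝ) ≤ b := le_trans (le_max_right a 1) (le_max_right _ _)
  have hgb : ∀ t, b ≤ t → |g t - L| ≤ ε / 2 := by
    intro t ht
    have := hb₀ t (le_trans (le_max_left _ _) ht)
    rw [Real.dist_eq] at this; linarith [this]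
  have key : ∀ t, b ≤ t → |f t - L * t - (f b - L * b)| ≤ ε / 2 * (t - b) := by
    intro t ht
    have hderiv : ∀ x ∈ Set.Icc b t,
        HasDerivWithinAt (fun s => f s - L * s) (g x - L) (Set.Icc b t) x := fun x hx =>
      ((hf x (le_trans hba hx.1)).sub (by simpa using (hasDerivAt_id x).const_mul L)).hasDerivWithinAt
    have := (convex_Icc b t).norm_image_sub_le_of_norm_hasDerivWithin_le hderiv
      (fun x hx => by simpa [Real.norm_eq_abs] using hgb x hx.1)
      (Set.left_mem_Icc.2 ht) (Set.right_mem_Icc.2 ht)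
    simpa [Real.norm_eq_abs, abs_of_nonneg (sub_nonneg.2 ht)] using this
  set C : ℝ := |f b - L * b| with hC
  have hCpos : 0 ≤ C := abs_nonneg _
  set T : ℝ := max b (4 * (C + 1) / ε) with hT
  filter_upwards [eventually_ge_atTop T] with t ht
  have htb : b ≤ t := le_trans (le_max_left _ _) ht
  have ht1 : (1:ℝ) ≤ t := le_trans hb1 htb
  have htpos : (0:ℝ) < t := by linarith
  have h4 : 4 * (C + 1) / ε ≤ t := le_trans (le_max_right _ _) ht
  have hCt : C / t ≤ ε / 4 := by
    rw [div_le_div_iff₀ htpos (by norm_num : (0:ℝ) < 4)]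
    rw [div_le_iff₀ hε] at h4
    nlinarith
  have hnum : |f t - L * t| ≤ C + ε / 2 * t := by
    have h1 := key t htb
    have habs : |f t - L * t| ≤ |f t - L * t - (f b - L * b)| + C := by
      calc |f t - L * t| = |(f t - L * t - (f b - L * b)) + (f b - L * b)| := by ring_nf
        _ ≤ _ := abs_add_le _ _
    nlinarith
  rw [Real.dist_eq]
  have heq : f t / t - L = (f t - L * t) / t := by field_simp
  have hCt' : C ≤ ε / 4 * t := by rw [div_le_iff₀ htpos] at hCt; linarith
  rw [heq, abs_div, abs_of_pos htpos, div_lt_iff₀ htpos]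
  nlinarith

lemma tendsto_sqrt_atTop' : Tendsto Real.sqrt atTop atTop := by
  apply tendsto_atTop_atTop.2
  intro b
  refine ⟨(max b 0)^2, fun a ha => ?_⟩
  calc b ≤ max b 0 := le_max_left _ _
    _ = Real.sqrt ((max b 0)^2) := (Real.sqrt_sq (le_max_right _ _)).symm
    _ ≤ Real.sqrt a := Real.sqrt_le_sqrt ha

/-- A solution of `u' = u e^{−u²}` with `u(t₀) > 0` is strictly increasing,
tends to `+∞`, and satisfies `e^{u²}/(2tu²) → 1` and `u/√(log t) → 1` as
`t → +∞`. -/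
theorem plateau_growth_ODE
    (t₀ : ℝ) (u : ℝ → ℝ)
    (hode : ∀ t ∈ Set.Ici t₀,
      HasDerivAt u (u t * Real.exp (-(u t) ^ 2)) t)
    (h0 : 0 < u t₀) :
    StrictMonoOn u (Set.Ici t₀) ∧
    Tendsto u atTop atTop ∧
    Tendsto (fun t => Real.exp ((u t) ^ 2) / (2 * t * (u t) ^ 2))
      atTop (nhds 1) ∧
    Tendsto (fun t => u t / Real.sqrt (Real.log t)) atTop (nhds 1) := by
  -- derivative of E = exp(u²)
  have hE : ∀ t ∈ Set.Ici t₀,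
      HasDerivAt (fun s => Real.exp ((u s)^2)) (2 * (u t)^2) t := by
    intro t ht
    have h2 : HasDerivAt (fun s => (u s)^2)
        ((2:ℕ) * u t ^ 1 * (u t * Real.exp (-(u t)^2))) t := (hode t ht).pow 2
    have h3 := h2.exp
    convert h3 using 1
    rw [Real.exp_neg]
    field_simp
    ring
  have hEcont : ContinuousOn (fun s => Real.exp ((u s)^2)) (Set.Ici t₀) :=
    fun t ht => ((hE t ht).continuousAt).continuousWithinAt
  have hEmono : MonotoneOn (fun s => Real.exp ((u s)^2)) (Set.Ici t₀) := by
    apply monotoneOn_of_deriv_nonneg (convex_Ici t₀) hEcont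
    · intro x hx
      rw [interior_Ici] at hx
      exact ((hE x (Set.mem_Ici.2 (Set.mem_Ioi.1 hx).le)).differentiableAt).differentiableWithinAt
    · intro x hx
      rw [interior_Ici] at hx
      rw [(hE x (Set.mem_Ici.2 (Set.mem_Ioi.1 hx).le)).deriv]
      positivity
  have usq : ∀ t ∈ Set.Ici t₀, (u t₀)^2 ≤ (u t)^2 := by
    intro t ht
    have := hEmono (Set.self_mem_Ici) ht ht
    exact (Real.exp_le_exp.1 this)
  have hucont : ContinuousOn u (Set.Ici t₀) :=
    fun t ht => (hode t ht).continuousAt.continuousWithinAt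
  have hupos : ∀ t ∈ Set.Ici t₀, 0 < u t := by
    intro t ht
    by_contra hle
    push_neg at hle
    have hne : u t ≠ 0 := by
      intro h0'
      have := usq t ht; rw [h0'] at this; nlinarith
    have hlt : u t < 0 := lt_of_le_of_ne hle hne
    have hmem : (0:ℝ) ∈ Set.Icc (u t) (u t₀) := ⟨hlt.le, h0.le⟩
    obtain ⟨c, hc, hc0⟩ := intermediate_value_Icc' ht (hucont.mono Set.Icc_subset_Ici_self) hmem
    have := usq c (Set.Icc_subset_Ici_self hc)
    rw [hc0] at this; nlinarith
  have hmono : StrictMonoOn u (Set.Ici t₀) := by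
    apply strictMonoOn_of_deriv_pos (convex_Ici t₀) hucont
    intro x hx
    rw [interior_Ici] at hx
    rw [(hode x (Set.mem_Ici.2 (Set.mem_Ioi.1 hx).le)).deriv]
    have := hupos x (Set.mem_Ici.2 (Set.mem_Ioi.1 hx).le)
    positivity
  -- E tends to atTop via linear lower bound
  have hphi : ∀ t ∈ Set.Ici t₀,
      HasDerivAt (fun s => Real.exp ((u s)^2) - 2*(u t₀)^2 * s)
        (2 * (u t)^2 - 2*(u t₀)^2) t := by
    intro t ht
    exact (hE t ht).sub (by simpa using (hasDerivAt_id t).const_mul (2*(u t₀)^2))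
  have hphimono : MonotoneOn (fun s => Real.exp ((u s)^2) - 2*(u t₀)^2 * s) (Set.Ici t₀) := by
    apply monotoneOn_of_deriv_nonneg (convex_Ici t₀)
      (fun t ht => ((hphi t ht).continuousAt).continuousWithinAt)
    · intro x hx
      rw [interior_Ici] at hx
      exact ((hphi x (Set.mem_Ici.2 (Set.mem_Ioi.1 hx).le)).differentiableAt).differentiableWithinAt
    · intro x hx
      rw [interior_Ici] at hx
      rw [(hphi x (Set.mem_Ici.2 (Set.mem_Ioi.1 hx).le)).deriv]
      have := usq x (Set.mem_Ici.2 (Set.mem_Ioi.1 hx).le)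
      linarith
  have hElow : ∀ t ∈ Set.Ici t₀,
      Real.exp ((u t₀)^2) + 2*(u t₀)^2 * (t - t₀) ≤ Real.exp ((u t)^2) := by
    intro t ht
    have := hphimono Set.self_mem_Ici ht ht
    simp only at this
    linarith
  have hEtop : Tendsto (fun t => Real.exp ((u t)^2)) atTop atTop := by
    apply tendsto_atTop_mono' _ _ _
    · exact fun t => Real.exp ((u t₀)^2) + 2*(u t₀)^2 * (t - t₀)
    · filter_upwards [eventually_ge_atTop t₀] with t ht
      exact hElow t ht
    · apply tendsto_atTop_add_const_left
      apply Tendsto.const_mul_atTop (by positivity : (0:ℝ) < 2*(u t₀)^2)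
      exact tendsto_atTop_add_const_right _ _ tendsto_id
  have husqtop : Tendsto (fun t => (u t)^2) atTop atTop := by
    have := Real.tendsto_log_atTop.comp hEtop
    refine this.congr fun t => ?_
    simp [Function.comp, Real.log_exp]
  have hutop : Tendsto u atTop atTop := by
    have h1 := tendsto_sqrt_atTop'.comp husqtop
    refine h1.congr' ?_
    filter_upwards [eventually_ge_atTop t₀] with t ht
    simp [Function.comp, Real.sqrt_sq (hupos t ht).le]
  -- derivative of H = exp(u²)/(2u²)
  have hH : ∀ t ∈ Set.Ici t₀,
      HasDerivAt (fun s => Real.exp ((u s)^2) / (2*(u s)^2)) (1 - 1/(u t)^2) t := by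
    intro t ht
    have hne : u t ≠ 0 := (hupos t ht).ne'
    have hden : HasDerivAt (fun s => 2*(u s)^2)
        (2*((2:ℕ) * u t ^ 1 * (u t * Real.exp (-(u t)^2)))) t :=
      ((hode t ht).pow 2).const_mul 2
    have hdiv := (hE t ht).div hden (by positivity)
    refine hdiv.congr_deriv ?_
    rw [Real.exp_neg]
    field_simp
    ring
  have hgtend : Tendsto (fun t => 1 - 1/(u t)^2) atTop (nhds 1) := by
    have hinv : Tendsto (fun t => ((u t)^2)⁻¹) atTop (nhds 0) :=
      husqtop.inv_tendsto_atTop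
    have h1 : Tendsto (fun _ : ℝ => (1:ℝ)) atTop (nhds 1) := tendsto_const_nhds
    simpa [one_div] using h1.sub hinv
  have goal3 : Tendsto (fun t => Real.exp ((u t) ^ 2) / (2 * t * (u t) ^ 2))
      atTop (nhds 1) := by
    have hdiv := tendsto_div_id_of_deriv_tendsto hH hgtend
    refine hdiv.congr fun t => ?_
    rw [div_div]
    congr 1
    ring
  -- goal 4: u / sqrt (log t) → 1
  have hlogr : Tendsto (fun t => Real.log (Real.exp ((u t)^2) / (2*t*(u t)^2)))
      atTop (nhds 0) := by
    have hc : ContinuousAt Real.log 1 := Real.continuousAt_log one_ne_zero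
    have := hc.tendsto.comp goal3
    simpa [Function.comp_def, Real.log_one] using this
  have hloguu : Tendsto (fun t => Real.log ((u t)^2) / (u t)^2) atTop (nhds 0) := by
    have := Real.isLittleO_log_id_atTop.tendsto_div_nhds_zero.comp husqtop
    refine this.congr fun t => ?_
    simp [Function.comp]
  have hinvsq : Tendsto (fun t => ((u t)^2)⁻¹) atTop (nhds 0) :=
    husqtop.inv_tendsto_atTop
  have hA : Tendsto (fun t => Real.log 2 * ((u t)^2)⁻¹ + Real.log ((u t)^2) / (u t)^2
      + Real.log (Real.exp ((u t)^2) / (2*t*(u t)^2)) * ((u t)^2)⁻¹) atTop (nhds 0) := by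
    have hc : Tendsto (fun _ : ℝ => Real.log 2) atTop (nhds (Real.log 2)) := tendsto_const_nhds
    have := ((hc.mul hinvsq).add hloguu).add (hlogr.mul hinvsq)
    simpa using this
  have hlogdiv : Tendsto (fun t => Real.log t / (u t)^2) atTop (nhds 1) := by
    have hone : Tendsto (fun _ : ℝ => (1:ℝ)) atTop (nhds 1) := tendsto_const_nhds
    have h1 := hone.sub hA
    rw [sub_zero] at h1
    refine h1.congr' ?_
    filter_upwards [eventually_ge_atTop (max t₀ 2)] with t ht
    have ht₀ : t₀ ≤ t := le_trans (le_max_left _ _) ht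
    have ht2 : (2:ℝ) ≤ t := le_trans (le_max_right _ _) ht
    have htpos : (0:ℝ) < t := by linarith
    have hup : 0 < u t := hupos t ht₀
    have hune : (u t)^2 ≠ 0 := by positivity
    have hexp : Real.log (Real.exp ((u t)^2) / (2*t*(u t)^2))
        = (u t)^2 - (Real.log 2 + Real.log t + Real.log ((u t)^2)) := by
      rw [Real.log_div (Real.exp_ne_zero _) (by positivity), Real.log_exp,
        Real.log_mul (by positivity) (by positivity),
        Real.log_mul (by norm_num) (by positivity)]
    rw [hexp]
    field_simp
    ring
  have hinv2 : Tendsto (fun t => (u t)^2 / Real.log t) atTop (nhds 1) := by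
    simpa [inv_div] using hlogdiv.inv₀ one_ne_zero
  have goal4 : Tendsto (fun t => u t / Real.sqrt (Real.log t)) atTop (nhds 1) := by
    have hs := (Real.continuous_sqrt.tendsto 1).comp hinv2
    rw [Real.sqrt_one] at hs
    refine hs.congr' ?_
    filter_upwards [eventually_ge_atTop t₀] with t ht
    have hup : 0 ≤ u t := (hupos t ht).le
    simp only [Function.comp]
    rw [Real.sqrt_div (sq_nonneg _), Real.sqrt_sq hup]
  exact ⟨hmono, hutop, goal3, goal4⟩
end
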